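/- (Triple-product formula for the rubber-rolling body with diagonal mass tensor.) Assume in addition that J is diagonal. Then for every s ∈ ℝ^{n−1} and all indices 1 ≤ i, j, l ≤ n−1, the following identity holds: (1/R³) ( I(e_i ∧ e_j), e_l ∧ e_n )_κ + m ⟨ −(1/R²)(e_i ∧ e_j) s̃ , e_l − (1/R)(e_l ∧ e_n) s̃ ⟩ = (m a / R³) ( s_j δ_{il} − s_i δ_{jl} ), where ⟨·,·⟩ is the Euclidean inner product on ℝ^n and δ the Kronecker delta. In particular, if moreover a = 0, the left-hand side vanishes identically (and hence all gyroscopic coefficients of the reduced system vanish). -/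
import Mathlib


noncomputable section

/-- `u ∧ v := u vᵀ − v uᵀ`, a skew-symmetric `n × n` matrix. -/
def wedge {n : ℕ} (u v : Fin n → ℝ) : Matrix (Fin n) (Fin n) ℝ :=
  Matrix.vecMulVec u v - Matrix.vecMulVec v u

/-- Killing pairing `(ξ, η)_κ := −(1/2) tr(ξη)`. -/
def killing {n : ℕ} (ξ η : Matrix (Fin n) (Fin n) ℝ) : ℝ :=
  -(1/2) * Matrix.trace (ξ * η)

/-- Inertia operator `I(Ω) := JΩ + ΩJ` associated with the mass tensor `J`. -/
def inertia {n : ℕ} (J Ω : Matrix (Fin n) (Fin n) ℝ) : Matrix (Fin n) (Fin n) ℝ :=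
  J * Ω + Ω * J

/-- Euclidean inner product on `ℝ^n`. -/
def edot {n : ℕ} (u v : Fin n → ℝ) : ℝ := ∑ μ, u μ * v μ

lemma edot_single_left {n : ℕ} (c : Fin n) (x : Fin n → ℝ) : edot (Pi.single c 1) x = x c := by
  simp [edot, Pi.single_apply, ite_mul]

lemma edot_single_right {n : ℕ} (c : Fin n) (x : Fin n → ℝ) : edot x (Pi.single c 1) = x c := by
  simp [edot, Pi.single_apply, mul_ite]

lemma wedge_mulVec {n : ℕ} (u v x : Fin n → ℝ) :
    (wedge u v).mulVec x = edot v x • u - edot u x • v := by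
  funext μ
  simp only [wedge, Matrix.mulVec, dotProduct, Matrix.sub_apply,
    Matrix.vecMulVec_apply, edot, Pi.sub_apply, Pi.smul_apply, smul_eq_mul,
    sub_mul, Finset.sum_sub_distrib, Finset.sum_mul]
  congr 1 <;> (apply Finset.sum_congr rfl; intros; ring)

lemma mul_vecMulVec {n : ℕ} (A : Matrix (Fin n) (Fin n) ℝ) (u v : Fin n → ℝ) :
    A * Matrix.vecMulVec u v = Matrix.vecMulVec (A.mulVec u) v := by
  funext μ ν
  simp only [Matrix.mul_apply, Matrix.vecMulVec_apply, Matrix.mulVec, dotProduct,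
    Finset.sum_mul]
  apply Finset.sum_congr rfl; intros; ring

lemma vecMulVec_mul {n : ℕ} (A : Matrix (Fin n) (Fin n) ℝ) (u v : Fin n → ℝ) :
    Matrix.vecMulVec u v * A = Matrix.vecMulVec u (A.transpose.mulVec v) := by
  funext μ ν
  simp only [Matrix.mul_apply, Matrix.vecMulVec_apply, Matrix.mulVec, dotProduct,
    Matrix.transpose_apply, Finset.mul_sum]
  apply Finset.sum_congr rfl; intros; ring

lemma trace_vecMulVec {n : ℕ} (u v : Fin n → ℝ) :
    Matrix.trace (Matrix.vecMulVec u v) = edot u v := by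
  simp [Matrix.trace, Matrix.diag, Matrix.vecMulVec_apply, edot]

lemma vecMulVec_mul_vecMulVec {n : ℕ} (u v w x : Fin n → ℝ) :
    Matrix.vecMulVec u v * Matrix.vecMulVec w x = edot v w • Matrix.vecMulVec u x := by
  funext μ ν
  simp only [Matrix.mul_apply, Matrix.vecMulVec_apply, Matrix.smul_apply, smul_eq_mul]
  rw [edot, Finset.sum_mul]
  apply Finset.sum_congr rfl; intros; ring

lemma edot_smul_left {n : ℕ} (r : ℝ) (u v : Fin n → ℝ) : edot (r • u) v = r * edot u v := by
  simp [edot, Finset.mul_sum, mul_assoc]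

lemma edot_sub_left {n : ℕ} (u u' v : Fin n → ℝ) : edot (u - u') v = edot u v - edot u' v := by
  simp [edot, sub_mul, Finset.sum_sub_distrib]

lemma edot_smul_right {n : ℕ} (r : ℝ) (u v : Fin n → ℝ) : edot u (r • v) = r * edot u v := by
  simp [edot, Finset.mul_sum, mul_left_comm]

lemma edot_sub_right {n : ℕ} (u v v' : Fin n → ℝ) : edot u (v - v') = edot u v - edot u v' := by
  simp [edot, mul_sub, Finset.sum_sub_distrib]

lemma edot_single_single {n : ℕ} (a b : Fin n) :
    edot (Pi.single a (1:ℝ)) (Pi.single b 1) = if a = b then 1 else 0 := by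
  rw [edot_single_left, Pi.single_apply]

lemma mulVec_single_apply {n : ℕ} (A : Matrix (Fin n) (Fin n) ℝ) (c r : Fin n) :
    A.mulVec (Pi.single c 1) r = A r c := by
  simp [Matrix.mulVec, dotProduct, Pi.single_apply, mul_ite]

lemma killing_formula {n : ℕ} (J : Matrix (Fin n) (Fin n) ℝ) (hJsym : J.IsSymm)
    (u v w x : Fin n → ℝ) :
    killing (inertia J (wedge u v)) (wedge w x) =
      -(1/2) * ( edot v w * edot (J.mulVec u) x - edot v x * edot (J.mulVec u) w
        - edot u w * edot (J.mulVec v) x + edot u x * edot (J.mulVec v) w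
        + edot (J.mulVec v) w * edot u x - edot (J.mulVec v) x * edot u w
        - edot (J.mulVec u) w * edot v x + edot (J.mulVec u) x * edot v w ) := by
  have hJt : J.transpose = J := hJsym
  simp only [killing, inertia, wedge, Matrix.mul_sub, Matrix.sub_mul, Matrix.add_mul,
    mul_vecMulVec J, vecMulVec_mul J, hJt, vecMulVec_mul_vecMulVec,
    Matrix.trace_sub, Matrix.trace_add, Matrix.trace_smul, trace_vecMulVec, smul_eq_mul]
  ring

/-- triple-product formula for the rubber-rolling body with diagonal
mass tensor.  Ambient dimension `n = d + 1 ≥ 3`; `e_i = Pi.single i.castSucc 1`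
for `i ≤ n − 1`, `e_n = Pi.single (Fin.last d) 1`, `s̃ = Fin.snoc s (R + a)`.
In particular, if `a = 0` the left-hand side vanishes identically. -/
theorem triple_product_formula_diagonal
    (d : ℕ) (hd : 2 ≤ d)
    (J : Matrix (Fin (d+1)) (Fin (d+1)) ℝ) (hJsym : J.IsSymm) (hJpos : J.PosDef)
    (hJdiag : ∀ μ ν, μ ≠ ν → J μ ν = 0)
    (m R a : ℝ) (hm : 0 < m) (hR : 0 < R)
    (s : Fin d → ℝ) (i j l : Fin d) :
    ((1/R^3) * killing
        (inertia J (wedge (Pi.single i.castSucc 1) (Pi.single j.castSucc 1)))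
        (wedge (Pi.single l.castSucc 1) (Pi.single (Fin.last d) 1))
      + m * edot
          ((-(1/R^2)) •
            (wedge (Pi.single i.castSucc 1) (Pi.single j.castSucc 1)).mulVec
              (Fin.snoc s (R + a)))
          (Pi.single l.castSucc 1 -
            (1/R) • (wedge (Pi.single l.castSucc 1) (Pi.single (Fin.last d) 1)).mulVec
              (Fin.snoc s (R + a)))
      = (m * a / R^3) * (s j * (if i = l then 1 else 0) - s i * (if j = l then 1 else 0)))
    ∧ (a = 0 →
      (1/R^3) * killing
        (inertia J (wedge (Pi.single i.castSucc 1) (Pi.single j.castSucc 1)))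
        (wedge (Pi.single l.castSucc 1) (Pi.single (Fin.last d) 1))
      + m * edot
          ((-(1/R^2)) •
            (wedge (Pi.single i.castSucc 1) (Pi.single j.castSucc 1)).mulVec
              (Fin.snoc s (R + a)))
          (Pi.single l.castSucc 1 -
            (1/R) • (wedge (Pi.single l.castSucc 1) (Pi.single (Fin.last d) 1)).mulVec
              (Fin.snoc s (R + a)))
      = 0) := by
  have hne : ∀ k : Fin d, k.castSucc ≠ Fin.last d := fun k => (Fin.castSucc_lt_last k).ne
  have hzi : J (Fin.last d) i.castSucc = 0 := hJdiag _ _ (hne i).symm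
  have hzj : J (Fin.last d) j.castSucc = 0 := hJdiag _ _ (hne j).symm
  have hR' : R ≠ 0 := hR.ne'
  have key :
      (1/R^3) * killing
        (inertia J (wedge (Pi.single i.castSucc 1) (Pi.single j.castSucc 1)))
        (wedge (Pi.single l.castSucc 1) (Pi.single (Fin.last d) 1))
      + m * edot
          ((-(1/R^2)) •
            (wedge (Pi.single i.castSucc 1) (Pi.single j.castSucc 1)).mulVec
              (Fin.snoc s (R + a)))
          (Pi.single l.castSucc 1 -
            (1/R) • (wedge (Pi.single l.castSucc 1) (Pi.single (Fin.last d) 1)).mulVec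
              (Fin.snoc s (R + a)))
      = (m * a / R^3) * (s j * (if i = l then 1 else 0) - s i * (if j = l then 1 else 0)) := by
    rw [killing_formula J hJsym, wedge_mulVec, wedge_mulVec]
    simp only [edot_single_left, edot_single_right, mulVec_single_apply,
      Fin.snoc_castSucc, Fin.snoc_last, hzi, hzj, edot_smul_left, edot_smul_right,
      edot_sub_left, edot_sub_right, edot_single_single, Fin.castSucc_inj,
      Pi.single_apply, hne i, hne j, hne l, if_neg, mul_zero, zero_mul,
      mul_one, mul_ite, ite_mul]
    by_cases hil : i = l <;> by_cases hjl : j = l <;>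
      (try simp [hil, hjl, hne i, hne j, hne l, (hne i).symm, (hne j).symm, (hne l).symm]) <;>
      (try field_simp) <;> ring
  exact ⟨key, fun ha => by rw [key, ha]; ring⟩
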